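/- arXiv:2102.03883 — 8 statements merged into one kernel-verified Lean document; each statement's English description precedes it below -/
import Mathlib

section
/- Let R be a commutative ring and let a = (a₁,a₂,a₃), b = (b₁,b₂,b₃), c = (c₁,c₂,c₃) be rows in R³ satisfying a₁b₁ + a₂b₂ + a₃b₃ = 1 and c₁b₁ + c₂b₂ + c₃b₃ = 1. Set d₁ = c₃a₂ − c₂a₃, d₂ = c₁a₃ − c₃a₁, d₃ = c₂a₁ − c₁a₂, and let ε be the 4×4 matrix over R with rows (1, d₁, d₂, d₃), (0,1,0,0), (0,0,1,0), (0,0,0,1). Then θ(c,b) = εᵀ · θ(a,b) · ε, where for rows x, y ∈ R³, θ(x,y) denotes the 4×4 matrix with rows (0, −y₁, −y₂, −y₃), (y₁, 0, −x₃, x₂), (y₂, x₃, 0, −x₁), (y₃, −x₂, x₁, 0). -/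
open Matrix

/-- For rows `x, y ∈ R³`, `theta x y` is the skew-symmetric 4×4 matrix with rows
`(0, −y₁, −y₂, −y₃), (y₁, 0, −x₃, x₂), (y₂, x₃, 0, −x₁), (y₃, −x₂, x₁, 0)`. -/
def theta {R : Type*} [CommRing R] (x y : Fin 3 → R) : Matrix (Fin 4) (Fin 4) R :=
  !![0,    -y 0, -y 1, -y 2;
     y 0,  0,    -x 2, x 1;
     y 1,  x 2,  0,    -x 0;
     y 2,  -x 1, x 0,  0]

/-- The elementary matrix `ε` with first row `(1, d₁, d₂, d₃)` where
`d₁ = c₃a₂ − c₂a₃`, `d₂ = c₁a₃ − c₃a₁`, `d₃ = c₂a₁ − c₁a₂`. -/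
def epsMatrix {R : Type*} [CommRing R] (a c : Fin 3 → R) : Matrix (Fin 4) (Fin 4) R :=
  !![1, c 2 * a 1 - c 1 * a 2, c 0 * a 2 - c 2 * a 0, c 1 * a 0 - c 0 * a 1;
     0, 1, 0, 0;
     0, 0, 1, 0;
     0, 0, 0, 1]

/-- If `a·b = 1` and `c·b = 1` then `θ(c,b) = εᵀ · θ(a,b) · ε`. -/
theorem theta_eq_transpose_mul_theta_mul
    {R : Type*} [CommRing R] (a b c : Fin 3 → R)
    (hab : a 0 * b 0 + a 1 * b 1 + a 2 * b 2 = 1)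
    (hcb : c 0 * b 0 + c 1 * b 1 + c 2 * b 2 = 1) :
    theta c b = (epsMatrix a c)ᵀ * theta a b * epsMatrix a c := by
  unfold theta epsMatrix
  ext i j
  fin_cases i <;> fin_cases j <;>
    simp [Matrix.mul_apply, Fin.sum_univ_succ] <;>
    first
    | ring1
    | linear_combination b 0 * hab - b 0 * hcb
    | linear_combination c 0 * hab - a 0 * hcb
    | linear_combination c 1 * hab - a 1 * hcb
    | linear_combination c 2 * hab - a 2 * hcb
    | linear_combination a 0 * hcb - c 0 * hab
    | linear_combination a 1 * hcb - c 1 * hab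
    | linear_combination a 2 * hcb - c 2 * hab
end

section
/- Let A be a commutative ring, B ⊆ A a subring, and h ∈ B such that the inclusion B ↪ A is an analytic isomorphism along h. Let I be an ideal of A, regarded as a B-module by restriction of scalars. Then the induced inclusion B ⊕ I ↪ A ⊕ I of excision rings is an analytic isomorphism along the element (h,0); that is: (h,0) is a non-zero-divisor of B ⊕ I, (h,0) is a non-zero-divisor of A ⊕ I, and the induced ring homomorphism (B ⊕ I)/(h,0)(B ⊕ I) → (A ⊕ I)/(h,0)(A ⊕ I) is bijective. -/
/-- A ring homomorphism `f : B → A` is an analytic isomorphism along `h ∈ B` if `h` is a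
non-zero-divisor of `B`, `f h` is a non-zero-divisor of `A`, and the induced map
`B/hB → A/(f h)A` is bijective. -/
def IsAnalyticIsoAlong {B A : Type*} [CommRing B] [CommRing A] (f : B →+* A) (h : B) : Prop :=
  h ∈ nonZeroDivisors B ∧ f h ∈ nonZeroDivisors A ∧
    Function.Bijective (Ideal.quotientMap (Ideal.span {f h}) f
      ((Ideal.span_singleton_le_iff_mem _).mpr (Ideal.mem_comap.mpr (Ideal.subset_span rfl))))

/-- If `B ⊆ A` is a subring, `h ∈ B`, and `B ↪ A` is an analytic isomorphism along `h`, then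
for any ideal `I` of `A` the induced inclusion of excision rings `B ⊕ I ↪ A ⊕ I`
(the ring map `g` with `g(b,i) = (b,i)`) is an analytic isomorphism along `(h,0)`. -/
theorem excision_analyticIso {A : Type*} [CommRing A] (B : Subring A) (h : ↥B)
    (I : Ideal A)
    (hBA : IsAnalyticIsoAlong B.subtype h)
    (g : Unitization ↥B ↥I →+* Unitization A ↥I)
    (hg : ∀ x : Unitization ↥B ↥I, (g x).fst = (x.fst : A) ∧ (g x).snd = x.snd) :
    IsAnalyticIsoAlong g (Unitization.inl h) := by
  obtain ⟨hB, hA, hinj, hsurj⟩ := hBA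
  have hgh : g (Unitization.inl h) = Unitization.inl ((h : A)) := by
    refine Unitization.ext ?_ ?_
    · rw [(hg (Unitization.inl h)).1, Unitization.fst_inl, Unitization.fst_inl]
    · rw [(hg (Unitization.inl h)).2, Unitization.snd_inl, Unitization.snd_inl]
  refine ⟨?_, ?_, ?_, ?_⟩
  · -- inl h is a non-zero-divisor of B ⊕ I
    rw [mem_nonZeroDivisors_iff_right]
    intro x hx
    have h1 : x.fst * h = 0 := by
      simpa only [Unitization.fst_mul, Unitization.fst_inl, Unitization.fst_zero]
        using congrArg (fun z => z.fst) hx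
    have h2 : h • x.snd = 0 := by
      simpa only [Unitization.snd_mul, Unitization.snd_inl, Unitization.fst_inl,
        Unitization.snd_zero, smul_zero, mul_zero, add_zero, zero_add]
        using congrArg (fun z => z.snd) hx
    have h3 : (x.snd : A) = 0 := by
      refine (mem_nonZeroDivisors_iff_right.mp hA) (x.snd : A) ?_
      have h4 := congrArg Subtype.val h2
      rw [mul_comm]
      exact h4
    exact Unitization.ext (by rw [Unitization.fst_zero]; exact (mem_nonZeroDivisors_iff_right.mp hB) _ h1)
      (by rw [Unitization.snd_zero]; exact Subtype.ext h3)
  · -- g (inl h) is a non-zero-divisor of A ⊕ I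
    rw [hgh, mem_nonZeroDivisors_iff_right]
    intro x hx
    have h1 : x.fst * (h : A) = 0 := by
      simpa only [Unitization.fst_mul, Unitization.fst_inl, Unitization.fst_zero]
        using congrArg (fun z => z.fst) hx
    have h2 : (h : A) • x.snd = 0 := by
      simpa only [Unitization.snd_mul, Unitization.snd_inl, Unitization.fst_inl,
        Unitization.snd_zero, smul_zero, mul_zero, add_zero, zero_add]
        using congrArg (fun z => z.snd) hx
    have h3 : (x.snd : A) = 0 := by
      refine (mem_nonZeroDivisors_iff_right.mp hA) (x.snd : A) ?_
      have h4 := congrArg Subtype.val h2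
      rw [mul_comm]
      exact h4
    exact Unitization.ext (by rw [Unitization.fst_zero]; exact (mem_nonZeroDivisors_iff_right.mp hA) _ h1)
      (by rw [Unitization.snd_zero]; exact Subtype.ext h3)
  · -- injectivity of the induced quotient map
    apply Ideal.quotientMap_injective'
    intro x hx
    rw [Ideal.mem_comap, Ideal.mem_span_singleton, hgh] at hx
    obtain ⟨y, hy⟩ := hx
    have hfst : (x.fst : A) = (h : A) * y.fst := by
      have h5 := congrArg (fun z => z.fst) hy
      rw [(hg x).1, Unitization.fst_mul, Unitization.fst_inl] at h5
      exact h5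
    have hsnd : x.snd = (h : A) • y.snd := by
      have h5 := congrArg (fun z => z.snd) hy
      rw [(hg x).2, Unitization.snd_mul, Unitization.snd_inl, Unitization.fst_inl,
        smul_zero, zero_mul, add_zero, add_zero] at h5
      exact h5
    have hx1 : (Ideal.Quotient.mk (Ideal.span {(h : ↥B)})) x.fst = 0 := by
      refine hinj ?_
      rw [Ideal.quotientMap_mk, map_zero, Ideal.Quotient.eq_zero_iff_mem,
        Ideal.mem_span_singleton]
      exact ⟨y.fst, hfst⟩
    rw [Ideal.Quotient.eq_zero_iff_mem, Ideal.mem_span_singleton] at hx1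
    obtain ⟨b, hb⟩ := hx1
    rw [Ideal.mem_span_singleton]
    refine ⟨Unitization.inl b + (y.snd : Unitization ↥B ↥I), ?_⟩
    have hmul : Unitization.inl h * (Unitization.inl b + (y.snd : Unitization ↥B ↥I))
        = Unitization.inl (h * b) + ((h • y.snd : ↥I) : Unitization ↥B ↥I) := by
      rw [mul_add, ← Unitization.inl_mul, Unitization.inl_mul_inr]
    rw [hmul]
    refine Unitization.ext ?_ ?_
    · rw [Unitization.fst_add, Unitization.fst_inl, Unitization.fst_inr, add_zero]
      exact hb
    · rw [Unitization.snd_add, Unitization.snd_inl, Unitization.snd_inr, zero_add]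
      refine Subtype.ext ?_
      have h6 := congrArg Subtype.val hsnd
      exact h6
  · -- surjectivity of the induced quotient map
    intro z
    obtain ⟨x, rfl⟩ := Ideal.Quotient.mk_surjective z
    obtain ⟨bq, hbq⟩ := hsurj (Ideal.Quotient.mk _ x.fst)
    obtain ⟨b, rfl⟩ := Ideal.Quotient.mk_surjective bq
    rw [Ideal.quotientMap_mk, Ideal.Quotient.eq, Ideal.mem_span_singleton] at hbq
    obtain ⟨c, hc⟩ := hbq
    refine ⟨Ideal.Quotient.mk _ (Unitization.inl b + (x.snd : Unitization ↥B ↥I)), ?_⟩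
    rw [Ideal.quotientMap_mk, Ideal.Quotient.eq, Ideal.mem_span_singleton, hgh]
    refine ⟨Unitization.inl c, ?_⟩
    set w : Unitization ↥B ↥I := Unitization.inl b + (x.snd : Unitization ↥B ↥I) with hw
    have hwf : w.fst = b := by
      rw [hw, Unitization.fst_add, Unitization.fst_inl, Unitization.fst_inr, add_zero]
    have hws : w.snd = x.snd := by
      rw [hw, Unitization.snd_add, Unitization.snd_inl, Unitization.snd_inr, zero_add]
    have h1 : (g w).fst = (b : A) := by rw [(hg w).1, hwf]
    have h2 : (g w).snd = x.snd := by rw [(hg w).2, hws]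
    rw [← Unitization.inl_mul]
    refine Unitization.ext ?_ ?_
    · have hfs : (g w - x).fst = (g w).fst - x.fst := rfl
      rw [hfs, Unitization.fst_inl, h1]
      exact hc
    · have hss : (g w - x).snd = (g w).snd - x.snd := rfl
      rw [hss, Unitization.snd_inl, h2, sub_self]
end

section
/- Let k be a field, d ≥ 1, let f be a nonzero polynomial in k[X₁, X₂, …, X_d], and let φ(X₁) ∈ k[X₁] be a monic polynomial of degree ≥ 1. Then there exist positive integers r₂, …, r_d such that, under the k-algebra endomorphism of k[X₁, …, X_d] determined by X₁ ↦ X₁ and Xᵢ ↦ Xᵢ + φ(X₁)^{rᵢ} for 2 ≤ i ≤ d, the image g of f satisfies g = c · h, where c ∈ k is a nonzero scalar and h, viewed as a polynomial in X₁ with coefficients in k[X₂, …, X_d] via the isomorphism k[X₁, …, X_d] ≅ (k[X₂, …, X_d])[X₁], is monic in X₁. -/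
lemma nagata_digits_eq_of_sum_eq (N : ℕ) : ∀ (K : ℕ) (c c' : ℕ → ℕ),
    (∀ j < K, c j < N) → (∀ j < K, c' j < N) →
    (∑ j ∈ Finset.range K, c j * N ^ j) = (∑ j ∈ Finset.range K, c' j * N ^ j) →
    ∀ j < K, c j = c' j := by
  intro K
  induction K with
  | zero => intro c c' _ _ _ j hj; omega
  | succ K ih =>
    intro c c' hc hc' hsum j hj
    have hrw : ∀ b : ℕ → ℕ, (∑ j ∈ Finset.range (K+1), b j * N ^ j)
        = (∑ j ∈ Finset.range K, b (j+1) * N ^ j) * N + b 0 := by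
      intro b
      rw [Finset.sum_range_succ' (fun j => b j * N ^ j) K, Finset.sum_mul]
      simp [pow_succ, mul_assoc]
    rw [hrw c, hrw c'] at hsum
    have hN : 0 < N := lt_of_le_of_lt (Nat.zero_le _) (hc 0 (Nat.succ_pos K))
    have h0 : c 0 = c' 0 := by
      have h := congrArg (· % N) hsum
      simp only [Nat.add_comm _ (c 0), Nat.add_comm _ (c' 0),
        Nat.add_mul_mod_self_right] at h
      rwa [Nat.mod_eq_of_lt (hc 0 (Nat.succ_pos K)),
        Nat.mod_eq_of_lt (hc' 0 (Nat.succ_pos K))] at h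
    have htail : (∑ j ∈ Finset.range K, c (j+1) * N ^ j)
        = ∑ j ∈ Finset.range K, c' (j+1) * N ^ j := by
      apply Nat.eq_of_mul_eq_mul_right hN
      exact Nat.add_right_cancel (m := c 0) (by rw [hsum, h0])
    rcases Nat.eq_zero_or_pos j with rfl | hjpos
    · exact h0
    · obtain ⟨j', rfl⟩ := Nat.exists_eq_add_of_lt hjpos
      simp only [Nat.zero_add]
      exact ih (fun j => c (j+1)) (fun j => c' (j+1))
        (fun i hi => hc (i+1) (by omega)) (fun i hi => hc' (i+1) (by omega)) htail j' (by omega)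

open Fin.NatCast in
/-- **Nagata's lemma.**  Let `k` be a field, `d = n + 1 ≥ 1`, `f ≠ 0` a polynomial in
`k[X₀, …, X_n]`, and `φ ∈ k[T]` monic of degree ≥ 1.  Then there are positive integers `rᵢ`
such that after the change of variables `X₀ ↦ X₀`, `Xᵢ ↦ Xᵢ + φ(X₀)^{rᵢ}` (`i ≠ 0`), the
image of `f` equals `c · h` with `c ∈ k` nonzero and `h` monic as a polynomial in `X₀` with
coefficients in `k[X₁, …, X_n]`. -/
theorem nagata_monic_change_of_variables {k : Type*} [Field k] (n : ℕ)
    (f : MvPolynomial (Fin (n + 1)) k) (hf : f ≠ 0)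
    (φ : Polynomial k) (hφ : φ.Monic) (hdeg : 1 ≤ φ.natDegree) :
    ∃ r : Fin (n + 1) → ℕ, (∀ i, 0 < r i) ∧
      ∃ (c : k) (h : Polynomial (MvPolynomial (Fin n) k)), c ≠ 0 ∧ h.Monic ∧
        MvPolynomial.finSuccEquiv k n
          ((MvPolynomial.aeval (fun i : Fin (n + 1) =>
              if i = 0 then MvPolynomial.X 0
              else MvPolynomial.X i +
                (Polynomial.aeval (MvPolynomial.X 0 : MvPolynomial (Fin (n + 1)) k) φ) ^ r i)) f)
          = Polynomial.C (MvPolynomial.C c) * h := by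
  classical
  set m := φ.natDegree with hm
  set D := f.totalDegree with hD
  set N := m * D + m + 1 with hNdef
  have hNpos : 0 < N := by omega
  -- the exponents
  let r : Fin (n + 1) → ℕ := fun j => N ^ (j : ℕ)
  -- the substitution
  let σ : Fin (n + 1) → MvPolynomial (Fin (n + 1)) k := fun i =>
    if i = 0 then MvPolynomial.X 0
    else MvPolynomial.X i +
      (Polynomial.aeval (MvPolynomial.X 0 : MvPolynomial (Fin (n + 1)) k) φ) ^ r i
  have hσ0 : σ 0 = MvPolynomial.X 0 := if_pos rfl
  have hσs : ∀ i : Fin n, σ i.succ = MvPolynomial.X i.succ +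
      (Polynomial.aeval (MvPolynomial.X 0 : MvPolynomial (Fin (n + 1)) k) φ)
        ^ (N ^ ((i : ℕ) + 1)) := by
    intro i
    show (if i.succ = 0 then _ else _) = _
    rw [if_neg (Fin.succ_ne_zero i)]
    rfl
  -- Φ : the image of φ as a polynomial over the smaller ring
  set Φ : Polynomial (MvPolynomial (Fin n) k) :=
    φ.map (algebraMap k (MvPolynomial (Fin n) k)) with hΦdef
  have hΦ : Φ.Monic := hφ.map _
  have hΦdeg : Φ.natDegree = m := hφ.natDegree_map _
  have hfs : MvPolynomial.finSuccEquiv k n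
      (Polynomial.aeval (MvPolynomial.X 0 : MvPolynomial (Fin (n + 1)) k) φ) = Φ := by
    have h1 := Polynomial.aeval_algHom_apply (MvPolynomial.finSuccEquiv k n)
      (MvPolynomial.X 0) φ
    rw [MvPolynomial.finSuccEquiv_X_zero] at h1
    rw [← h1, Polynomial.aeval_def,
      show (algebraMap k (Polynomial (MvPolynomial (Fin n) k)))
          = (Polynomial.C).comp (algebraMap k (MvPolynomial (Fin n) k)) from
        RingHom.ext fun a => Polynomial.algebraMap_apply a]
    rfl
  have hCconst : ∀ a : k, MvPolynomial.finSuccEquiv k n (MvPolynomial.C a)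
      = Polynomial.C (MvPolynomial.C a) := by
    intro a; simp [MvPolynomial.finSuccEquiv_apply]
  -- the factors
  have hm1 : 1 ≤ m := hdeg
  have hfacdlt : ∀ (x : MvPolynomial (Fin n) k) (e : ℕ), 0 < e →
      (Polynomial.C x).degree < (Φ ^ e).degree := by
    intro x e he
    refine lt_of_le_of_lt Polynomial.degree_C_le ?_
    rw [← Polynomial.natDegree_pos_iff_degree_pos, hΦ.natDegree_pow, hΦdeg]
    exact Nat.mul_pos he (by omega)
  have hfac : ∀ i : Fin n,
      (Polynomial.C (MvPolynomial.X i) + Φ ^ (N ^ ((i : ℕ) + 1))).Monic :=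
    fun i => (hΦ.pow _).add_of_right (hfacdlt _ _ (pow_pos hNpos _))
  have hfacdeg : ∀ i : Fin n,
      (Polynomial.C (MvPolynomial.X i) + Φ ^ (N ^ ((i : ℕ) + 1))).natDegree
        = N ^ ((i : ℕ) + 1) * m := by
    intro i
    rw [Polynomial.natDegree_eq_of_degree_eq
      (Polynomial.degree_add_eq_right_of_degree_lt (hfacdlt _ _ (pow_pos hNpos _))),
      hΦ.natDegree_pow, hΦdeg]
  -- the monic building blocks
  let M : (Fin (n + 1) →₀ ℕ) → Polynomial (MvPolynomial (Fin n) k) := fun d =>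
    Polynomial.X ^ (d 0) *
      ∏ i : Fin n, (Polynomial.C (MvPolynomial.X i) + Φ ^ (N ^ ((i : ℕ) + 1))) ^ (d i.succ)
  let W : (Fin (n + 1) →₀ ℕ) → ℕ := fun d =>
    d 0 + ∑ i : Fin n, d i.succ * (N ^ ((i : ℕ) + 1) * m)
  have hMmonic : ∀ d, (M d).Monic := fun d =>
    (Polynomial.monic_X_pow _).mul
      (Polynomial.monic_prod_of_monic _ _ fun i _ => (hfac i).pow _)
  have hMdeg : ∀ d, (M d).natDegree = W d := by
    intro d
    show (Polynomial.X ^ (d 0) * _).natDegree = _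
    rw [((Polynomial.monic_X_pow _ : (Polynomial.X ^ (d 0) : Polynomial (MvPolynomial (Fin n) k)).Monic)).natDegree_mul
        (Polynomial.monic_prod_of_monic _ _ fun i _ => (hfac i).pow _),
      Polynomial.natDegree_X_pow,
      Polynomial.natDegree_prod_of_monic _ _ (fun i _ => (hfac i).pow _)]
    congr 1
    refine Finset.sum_congr rfl fun i _ => ?_
    rw [(hfac i).natDegree_pow, hfacdeg i]
  -- main identity
  have hmain : MvPolynomial.finSuccEquiv k n (MvPolynomial.aeval σ f)
      = ∑ d ∈ f.support,
          Polynomial.C (MvPolynomial.C (MvPolynomial.coeff d f)) * M d := by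
    conv_lhs => rw [f.as_sum]
    rw [map_sum, map_sum]
    refine Finset.sum_congr rfl fun d _ => ?_
    rw [MvPolynomial.aeval_monomial, Finsupp.prod_pow, Fin.prod_univ_succ, hσ0]
    rw [MvPolynomial.algebraMap_eq]
    simp only [map_mul, map_pow, map_prod, hσs, map_add, hCconst,
      MvPolynomial.finSuccEquiv_X_zero, MvPolynomial.finSuccEquiv_X_succ, hfs]
    rfl
  -- bounds on exponents
  have hBound : ∀ d ∈ f.support, ∀ j : Fin (n + 1), d j ≤ D := by
    intro d hd j
    refine le_trans ?_ (MvPolynomial.le_totalDegree hd)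
    by_cases hj : j ∈ d.support
    · exact Finset.single_le_sum (fun _ _ => Nat.zero_le _) hj
    · simp [Finsupp.notMem_support_iff.mp hj]
  -- W written in digit form
  have hWalt : ∀ d : Fin (n + 1) →₀ ℕ, W d
      = ∑ j ∈ Finset.range (n + 1),
          (if j = 0 then d 0 else m * d (j : Fin (n + 1))) * N ^ j := by
    intro d
    rw [← Fin.sum_univ_eq_sum_range
      (fun j => (if j = 0 then d 0 else m * d (j : Fin (n + 1))) * N ^ j) (n + 1),
      Fin.sum_univ_succ]
    simp only [Fin.cast_val_eq_self]
    simp only [Fin.val_zero, Fin.val_succ, pow_zero, mul_one]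
    simp only [if_true]
    show d 0 + _ = d 0 + _
    congr 1
    refine Finset.sum_congr rfl fun i _ => ?_
    rw [if_neg (Nat.succ_ne_zero _)]
    ring
  -- injectivity of W on the support
  have hWinj : ∀ d ∈ f.support, ∀ d' ∈ f.support, W d = W d' → d = d' := by
    intro d hd d' hd' hWeq
    have hcb : ∀ (e : Fin (n + 1) →₀ ℕ), (∀ j : Fin (n + 1), e j ≤ D) →
        ∀ j < n + 1, (if j = 0 then e 0 else m * e (j : Fin (n + 1))) < N := by
      intro e he j _
      have hDm : D ≤ m * D := Nat.le_mul_of_pos_left D (by omega)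
      by_cases hj : j = 0
      · rw [if_pos hj]
        have := he 0; omega
      · rw [if_neg hj]
        have h1 : m * e (j : Fin (n + 1)) ≤ m * D := Nat.mul_le_mul_left m (he _)
        omega
    have hdig := nagata_digits_eq_of_sum_eq N (n + 1)
      (fun j => if j = 0 then d 0 else m * d (j : Fin (n + 1)))
      (fun j => if j = 0 then d' 0 else m * d' (j : Fin (n + 1)))
      (hcb d (hBound d hd)) (hcb d' (hBound d' hd'))
      (by rw [← hWalt, ← hWalt, hWeq])
    ext j
    have hj := hdig (j : ℕ) j.isLt
    simp only [Fin.cast_val_eq_self] at hj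
    by_cases h0 : j = 0
    · subst h0
      simpa using hj
    · have hv : ¬ ((j : ℕ) = 0) := fun hh => h0 (Fin.ext (by simpa using hh))
      rw [if_neg hv, if_neg hv] at hj
      exact Nat.eq_of_mul_eq_mul_left (by omega) hj
  -- pick the maximal exponent
  obtain ⟨dstar, hdstar, hmax⟩ := f.support.exists_max_image W
    (MvPolynomial.support_nonempty.mpr hf)
  set c : k := MvPolynomial.coeff dstar f with hcdef
  have hc : c ≠ 0 := MvPolynomial.mem_support_iff.mp hdstar
  have hCcne : (MvPolynomial.C c : MvPolynomial (Fin n) k) ≠ 0 := by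
    simpa using hc
  -- the leading coefficient
  have hGcoeff : (MvPolynomial.finSuccEquiv k n (MvPolynomial.aeval σ f)).coeff (W dstar)
      = MvPolynomial.C c := by
    rw [hmain, Polynomial.finset_sum_coeff,
      Finset.sum_eq_single_of_mem dstar hdstar ?_]
    · rw [Polynomial.coeff_C_mul, ← hMdeg dstar, (hMmonic dstar).coeff_natDegree, mul_one]
    · intro d hd hne
      rw [Polynomial.coeff_C_mul, Polynomial.coeff_eq_zero_of_natDegree_lt, mul_zero]
      rw [hMdeg]
      exact lt_of_le_of_ne (hmax d hd) fun hEq => hne (hWinj d hd dstar hdstar hEq)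
  have hdegle : (MvPolynomial.finSuccEquiv k n (MvPolynomial.aeval σ f)).natDegree
      ≤ W dstar := by
    rw [hmain]
    refine Polynomial.natDegree_sum_le_of_forall_le _ _ fun d hd => ?_
    refine le_trans (Polynomial.natDegree_mul_le) ?_
    rw [Polynomial.natDegree_C, hMdeg, zero_add]
    exact hmax d hd
  have hdegeq : (MvPolynomial.finSuccEquiv k n (MvPolynomial.aeval σ f)).natDegree
      = W dstar :=
    le_antisymm hdegle (Polynomial.le_natDegree_of_ne_zero (by rw [hGcoeff]; exact hCcne))
  have hlead : (MvPolynomial.finSuccEquiv k n (MvPolynomial.aeval σ f)).leadingCoeff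
      = MvPolynomial.C c := by
    rw [Polynomial.leadingCoeff, hdegeq, hGcoeff]
  -- assemble
  refine ⟨r, fun j => pow_pos hNpos _,
    c, Polynomial.C (MvPolynomial.C c⁻¹) * MvPolynomial.finSuccEquiv k n (MvPolynomial.aeval σ f),
    hc, ?_, ?_⟩
  · show Polynomial.leadingCoeff _ = 1
    rw [Polynomial.leadingCoeff_mul, Polynomial.leadingCoeff_C, hlead, ← map_mul,
      inv_mul_cancel₀ hc, map_one]
  · rw [← mul_assoc, ← Polynomial.C_mul, ← MvPolynomial.C_mul, mul_inv_cancel₀ hc,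
      MvPolynomial.C_1, Polynomial.C_1, one_mul]
end

section
/- Let R be a commutative ring, I an ideal of R, S ⊆ R a subring, and h ∈ S such that the inclusion S ↪ R is an analytic isomorphism along h. Then the inclusion S[It] ↪ R[It] is an analytic isomorphism along h; that is: the constant polynomial h is a non-zero-divisor of S[It], it is a non-zero-divisor of the Rees algebra R[It], and the induced ring homomorphism S[It]/(h·S[It]) → R[It]/(h·R[It]) is bijective. -/
open Polynomial in
/-- Let `S ⊆ R` be a subring, `h ∈ S`, and suppose `S ↪ R` is an analytic isomorphism along
`h`.  Let `T = S[It]` be the subring of `R[t]` of polynomials with constant coefficient in `S`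
and `n`-th coefficient in `Iⁿ` for `n ≥ 1`.  Then the inclusion `S[It] ↪ R[It]` into the Rees
algebra of `I` is an analytic isomorphism along the constant polynomial `h`. -/
theorem reesAlgebra_analyticIso {R : Type*} [CommRing R] (I : Ideal R)
    (S : Subring R) (h : ↥S)
    (hSR : IsAnalyticIsoAlong S.subtype h)
    (T : Subring (Polynomial R))
    (hT : ∀ p : Polynomial R, p ∈ T ↔ p.coeff 0 ∈ S ∧ ∀ n : ℕ, 0 < n → p.coeff n ∈ I ^ n)
    (hle : T ≤ (reesAlgebra I).toSubring)
    (hmem : Polynomial.C (h : R) ∈ T) :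
    IsAnalyticIsoAlong (Subring.inclusion hle) ⟨Polynomial.C (h : R), hmem⟩ := by
  obtain ⟨h1, h2, h3inj, h3surj⟩ := hSR
  have hincl : ∀ y : T,
      ((Subring.inclusion hle y : ↥(reesAlgebra I).toSubring) : Polynomial R) = ↑y :=
    fun y => rfl
  -- `h` is a non-zero-divisor of `R`
  have h2' : (↑h : R) ∈ nonZeroDivisors R := h2
  -- `C h` is a non-zero-divisor of `R[X]`
  have hCh : (C (↑h : R)) ∈ nonZeroDivisors (Polynomial R) := by
    rw [mem_nonZeroDivisors_iff_right]
    intro p hp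
    ext n
    have := congrArg (fun q : Polynomial R => q.coeff n) hp
    simp only [coeff_mul_C, coeff_zero] at this
    simpa using mem_nonZeroDivisors_iff_right.mp h2' _ this
  -- injectivity on the `S` side : `S ∩ hR = hS`
  have hSinter : ∀ s : S, (↑s : R) ∈ Ideal.span {(↑h : R)} → s ∈ Ideal.span {h} := by
    intro s hs
    rw [← Ideal.Quotient.eq_zero_iff_mem]
    apply h3inj
    rw [map_zero, Ideal.quotientMap_mk, Ideal.Quotient.eq_zero_iff_mem]
    exact hs
  -- surjectivity on the `S` side
  have hSsurj : ∀ r : R, ∃ s : S, r - (↑s : R) ∈ Ideal.span {(↑h : R)} := by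
    intro r
    obtain ⟨y, hy⟩ := h3surj (Ideal.Quotient.mk _ r)
    obtain ⟨s, rfl⟩ := Ideal.Quotient.mk_surjective y
    rw [Ideal.quotientMap_mk, Ideal.Quotient.mk_eq_mk_iff_sub_mem] at hy
    refine ⟨s, ?_⟩
    have := (Ideal.span {(↑h : R)}).neg_mem hy
    simpa [neg_sub] using this
  refine ⟨?_, ?_, ?_, ?_⟩
  · -- `C h` is a non-zero-divisor of `T`
    rw [mem_nonZeroDivisors_iff_right]
    intro x hx
    have hx' : (↑x : Polynomial R) * C (↑h : R) = 0 := by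
      have := congrArg (Subtype.val) hx
      simpa using this
    exact Subtype.ext (mem_nonZeroDivisors_iff_right.mp hCh _ hx')
  · -- `C h` is a non-zero-divisor of `reesAlgebra I`
    rw [mem_nonZeroDivisors_iff_right]
    intro x hx
    have hx' : (↑x : Polynomial R) * C (↑h : R) = 0 := by
      have := congrArg (Subtype.val) hx
      simpa [hincl] using this
    exact Subtype.ext (mem_nonZeroDivisors_iff_right.mp hCh _ hx')
  · -- injectivity
    apply Ideal.quotientMap_injective'
    intro x hx
    rw [Ideal.mem_comap, Ideal.mem_span_singleton] at hx
    obtain ⟨a, ha⟩ := hx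
    rw [Ideal.mem_span_singleton]
    have ha' : (↑x : Polynomial R) = C (↑h : R) * ↑a := by
      have := congrArg (Subtype.val) ha
      simpa [hincl] using this
    -- show `↑a ∈ T`
    have haT : (↑a : Polynomial R) ∈ T := by
      rw [hT]
      refine ⟨?_, fun n _ => (mem_reesAlgebra_iff I _).mp a.2 n⟩
      -- constant coefficient of `a` lies in `S`
      have hx0 : (↑x : Polynomial R).coeff 0 ∈ S := ((hT _).mp x.2).1
      set s : S := ⟨(↑x : Polynomial R).coeff 0, hx0⟩ with hs
      have heq : (↑s : R) = (↑h : R) * (↑a : Polynomial R).coeff 0 := by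
        have := congrArg (fun q : Polynomial R => q.coeff 0) ha'
        simpa [coeff_C_mul] using this
      have hsmem : s ∈ Ideal.span {h} := hSinter s (by
        rw [Ideal.mem_span_singleton]; exact ⟨_, heq⟩)
      rw [Ideal.mem_span_singleton] at hsmem
      obtain ⟨c, hc⟩ := hsmem
      have hc' : (↑s : R) = (↑h : R) * (↑c : R) := by exact_mod_cast congrArg Subtype.val hc
      have hcz : ((↑a : Polynomial R).coeff 0 - (↑c : R)) * (↑h : R) = 0 := by
        rw [sub_mul, mul_comm _ ((↑h : R)), mul_comm _ ((↑h : R)), ← heq, ← hc', sub_self]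
      have h0 := sub_eq_zero.mp (mem_nonZeroDivisors_iff_right.mp h2' _ hcz)
      rw [h0]
      exact c.2
    exact ⟨⟨↑a, haT⟩, Subtype.ext (by simpa using ha')⟩
  · -- surjectivity
    intro y
    obtain ⟨a, rfl⟩ := Ideal.Quotient.mk_surjective y
    obtain ⟨s, hs⟩ := hSsurj ((↑a : Polynomial R).coeff 0)
    rw [Ideal.mem_span_singleton] at hs
    obtain ⟨r, hr⟩ := hs
    set p : Polynomial R := ↑a - C ((↑a : Polynomial R).coeff 0) + C (↑s : R) with hp
    have hpT : p ∈ T := by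
      rw [hT]
      constructor
      · simp [hp]
      · intro n hn
        have : p.coeff n = (↑a : Polynomial R).coeff n := by
          simp [hp, coeff_C, Nat.pos_iff_ne_zero.mp hn]
        rw [this]
        exact (mem_reesAlgebra_iff I _).mp a.2 n
    have hCr : (C (-r) : Polynomial R) ∈ (reesAlgebra I).toSubring := by
      show C (-r) ∈ reesAlgebra I
      rw [mem_reesAlgebra_iff]
      intro i
      rcases Nat.eq_zero_or_pos i with rfl | hi
      · simp [Ideal.one_eq_top]
      · simp [coeff_C, Nat.pos_iff_ne_zero.mp hi]
    refine ⟨Ideal.Quotient.mk _ (⟨p, hpT⟩ : T), ?_⟩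
    rw [Ideal.quotientMap_mk, Ideal.Quotient.mk_eq_mk_iff_sub_mem, Ideal.mem_span_singleton]
    refine ⟨⟨C (-r), hCr⟩, Subtype.ext ?_⟩
    show ((Subring.inclusion hle ⟨p, hpT⟩ : ↥(reesAlgebra I).toSubring) : Polynomial R)
        - (↑a : Polynomial R) = C (↑h : R) * C (-r)
    rw [hincl, ← Polynomial.C_mul, mul_neg, ← hr]
    show (↑a - C ((↑a : Polynomial R).coeff 0) + C (↑s : R)) - (↑a : Polynomial R)
        = C (-((↑a : Polynomial R).coeff 0 - (↑s : R)))
    rw [map_neg, map_sub]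
    ring
end

section
/- Let R be a commutative ring, I an ideal of R, S ⊆ R a subring, and h ∈ S such that the inclusion S ↪ R is an analytic isomorphism along h. Then the inclusion S[It, t⁻¹] ↪ R[It, t⁻¹] of extended Rees algebras is an analytic isomorphism along h; that is: h is a non-zero-divisor of S[It, t⁻¹], h is a non-zero-divisor of R[It, t⁻¹], and the induced ring homomorphism S[It, t⁻¹]/(h·S[It, t⁻¹]) → R[It, t⁻¹]/(h·R[It, t⁻¹]) is bijective. -/
lemma C_mul_apply' {R : Type*} [CommRing R] (a : R) (p : LaurentPolynomial R) (n : ℤ) :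
    (LaurentPolynomial.C a * p).coeff n = a * p.coeff n :=
  AddMonoidAlgebra.coeff_single_zero_mul p a n

/-- Let `S ⊆ R` be a subring, `h ∈ S`, and suppose `S ↪ R` is an analytic isomorphism along
`h`.  Let `TR = R[It,t⁻¹]` be the extended Rees algebra: the subring of the Laurent
polynomial ring `R[t,t⁻¹]` of Laurent polynomials whose `n`-th coefficient lies in `Iⁿ` for
all `n > 0`; and let `TS = S[It,t⁻¹]` be the subring of those whose `n`-th coefficient lies
in `Iⁿ` for `n > 0` and in `S` for `n ≤ 0`.  Then the inclusion `S[It,t⁻¹] ↪ R[It,t⁻¹]` is an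
analytic isomorphism along the constant Laurent polynomial `h`. -/
theorem extendedReesAlgebra_analyticIso {R : Type*} [CommRing R] (I : Ideal R)
    (S : Subring R) (h : ↥S)
    (hSR : IsAnalyticIsoAlong S.subtype h)
    (TR : Subring (LaurentPolynomial R))
    (hTR : ∀ p : LaurentPolynomial R, p ∈ TR ↔ ∀ n : ℤ, 0 < n → AddMonoidAlgebra.coeff p n ∈ I ^ n.toNat)
    (TS : Subring (LaurentPolynomial R))
    (hTS : ∀ p : LaurentPolynomial R, p ∈ TS ↔
      (∀ n : ℤ, 0 < n → AddMonoidAlgebra.coeff p n ∈ I ^ n.toNat) ∧ (∀ n : ℤ, n ≤ 0 → AddMonoidAlgebra.coeff p n ∈ S))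
    (hle : TS ≤ TR)
    (hmem : LaurentPolynomial.C (h : R) ∈ TS) :
    IsAnalyticIsoAlong (Subring.inclusion hle) ⟨LaurentPolynomial.C (h : R), hmem⟩ := by
  classical
  obtain ⟨-, hRnz, hbij⟩ := hSR
  have hRnz' : ∀ a : R, (h : R) * a = 0 → a = 0 := fun a ha =>
    hRnz.2 a (by rwa [mul_comm] at ha)
  -- `C h` is a non-zero-divisor of the Laurent polynomial ring
  have hCnz : ∀ p : LaurentPolynomial R, LaurentPolynomial.C (h : R) * p = 0 → p = 0 := by
    intro p hp
    ext n
    have h1 : (LaurentPolynomial.C (h : R) * p).coeff n = 0 := by rw [hp]; rfl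
    rw [C_mul_apply'] at h1
    exact hRnz' _ h1
  -- non-zero-divisor in any subring containing `C h`
  have hnzdSub : ∀ (T : Subring (LaurentPolynomial R)) (hm : LaurentPolynomial.C (h : R) ∈ T),
      (⟨LaurentPolynomial.C (h : R), hm⟩ : T) ∈ nonZeroDivisors T := by
    intro T hm
    rw [mem_nonZeroDivisors_iff_right]
    intro z hz
    have hz' : (z : LaurentPolynomial R) * LaurentPolynomial.C (h : R) = 0 :=
      congrArg Subtype.val hz
    exact Subtype.ext (hCnz z (by rwa [mul_comm] at hz'))
  -- surjectivity of S/hS → R/hR, concretely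
  have hsurjR : ∀ a : R, ∃ s : S, ∃ b : R, a = (s : R) + (h : R) * b := by
    intro a
    obtain ⟨c, hc⟩ := hbij.2 (Ideal.Quotient.mk _ a)
    obtain ⟨s, rfl⟩ := Ideal.Quotient.mk_surjective c
    rw [Ideal.quotientMap_mk] at hc
    obtain ⟨b, hb⟩ := Ideal.mem_span_singleton.mp (Ideal.Quotient.eq.mp hc)
    simp only [Subring.subtype_apply] at hb
    exact ⟨s, -b, by rw [mul_neg, ← hb]; ring⟩
  -- injectivity of S/hS → R/hR, concretely
  have hinjR : ∀ s : S, ∀ b : R, (s : R) = (h : R) * b → b ∈ S := by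
    intro s b hb
    have h0 : Ideal.quotientMap (Ideal.span {S.subtype h}) S.subtype
        ((Ideal.span_singleton_le_iff_mem _).mpr (Ideal.mem_comap.mpr (Ideal.subset_span rfl)))
        (Ideal.Quotient.mk _ s) = 0 := by
      rw [Ideal.quotientMap_mk]
      exact Ideal.Quotient.eq_zero_iff_mem.mpr (Ideal.mem_span_singleton.mpr ⟨b, hb⟩)
    have h1 : Ideal.Quotient.mk (Ideal.span {h}) s = 0 := hbij.1 (by rw [h0, map_zero])
    obtain ⟨s', hs'⟩ := Ideal.mem_span_singleton.mp (Ideal.Quotient.eq_zero_iff_mem.mp h1)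
    have : (h : R) * b = (h : R) * (s' : R) := by
      rw [← hb, hs']; push_cast; ring
    have hRnzc : (h : R) ∈ nonZeroDivisors R := hRnz
    rw [mul_cancel_left_mem_nonZeroDivisors hRnzc] at this
    exact this ▸ s'.2
  refine ⟨hnzdSub TS hmem, hnzdSub TR (hle hmem), ?_, ?_⟩
  -- from bijectivity of S/hS → R/hR
  · -- injectivity
    apply Ideal.quotientMap_injective'
    intro x hx
    rw [Ideal.mem_comap] at hx
    obtain ⟨c, hc⟩ := Ideal.mem_span_singleton.mp hx
    have hc' : (x : LaurentPolynomial R) =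
        LaurentPolynomial.C (h : R) * (c : LaurentPolynomial R) := congrArg Subtype.val hc
    have hcTS : (c : LaurentPolynomial R) ∈ TS := by
      rw [hTS]
      refine ⟨(hTR _).mp c.2, fun n hn => ?_⟩
      have hxn : (x : LaurentPolynomial R).coeff n ∈ S := ((hTS _).mp x.2).2 n hn
      refine hinjR ⟨_, hxn⟩ ((c : LaurentPolynomial R).coeff n) ?_
      show (x : LaurentPolynomial R).coeff n = _
      rw [hc', C_mul_apply']
    exact Ideal.mem_span_singleton.mpr ⟨⟨c, hcTS⟩, Subtype.ext hc'⟩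
  · -- surjectivity
    intro y
    obtain ⟨py, rfl⟩ := Ideal.Quotient.mk_surjective y
    rcases py with ⟨p, hp⟩
    choose sfun bfun hsb using hsurjR
    set sel1 : R → R := fun a => if a = 0 then 0 else (sfun a : R) with hsel1
    set sel2 : R → R := fun a => if a = 0 then 0 else bfun a with hsel2
    have hsel : ∀ a : R, a = sel1 a + (h : R) * sel2 a := by
      intro a
      by_cases ha : a = 0
      · simp [hsel1, hsel2, ha]
      · simp only [hsel1, hsel2, if_neg ha]; exact hsb a
    have hselS : ∀ a : R, sel1 a ∈ S := by
      intro a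
      by_cases ha : a = 0
      · simp only [hsel1, if_pos ha]; exact S.zero_mem
      · simp only [hsel1, if_neg ha]; exact (sfun a).2
    set q : LaurentPolynomial R := AddMonoidAlgebra.ofCoeff <| Finsupp.onFinset p.coeff.support
      (fun n => if 0 < n then p.coeff n else sel1 (p.coeff n))
      (fun n hn => Finsupp.mem_support_iff.mpr (by
        intro h0; apply hn; simp [h0, hsel1])) with hqdef
    set r : LaurentPolynomial R := AddMonoidAlgebra.ofCoeff <| Finsupp.onFinset p.coeff.support
      (fun n => if 0 < n then 0 else sel2 (p.coeff n))
      (fun n hn => Finsupp.mem_support_iff.mpr (by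
        intro h0; apply hn; simp [h0, hsel2])) with hrdef
    have hqc : ∀ n : ℤ, q.coeff n = if 0 < n then p.coeff n else sel1 (p.coeff n) := fun n => rfl
    have hrc : ∀ n : ℤ, r.coeff n = if 0 < n then 0 else sel2 (p.coeff n) := fun n => rfl
    have key : p = q + LaurentPolynomial.C (h : R) * r := by
      ext n
      have : (q + LaurentPolynomial.C (h : R) * r).coeff n
          = q.coeff n + (h : R) * r.coeff n := by
        rw [AddMonoidAlgebra.coeff_add, Finsupp.add_apply, C_mul_apply']
      rw [this, hqc, hrc]
      by_cases hn : 0 < n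
      · simp [if_pos hn]
      · simp only [if_neg hn]
        exact hsel (p.coeff n)
    have hq : q ∈ TS := by
      rw [hTS]
      constructor
      · intro n hn
        rw [hqc, if_pos hn]
        exact (hTR p).mp hp n hn
      · intro n hn
        rw [hqc, if_neg (not_lt.mpr hn)]
        exact hselS (p.coeff n)
    have hr : r ∈ TR := by
      rw [hTR]
      intro n hn
      rw [hrc, if_pos hn]
      exact zero_mem _
    refine ⟨Ideal.Quotient.mk _ (⟨q, hq⟩ : TS), ?_⟩
    rw [Ideal.quotientMap_mk]
    refine Ideal.Quotient.eq.mpr (Ideal.mem_span_singleton.mpr ⟨-⟨r, hr⟩, Subtype.ext ?_⟩)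
    show q - p = LaurentPolynomial.C (h : R) * (-r)
    rw [key]; ring
end

section
/- Let R be a commutative ring, I an ideal of R, and n ≥ 2. Let φ : R ⊕ I → R be the ring homomorphism from the excision ring defined by φ((r,i)) = r + i, and let 0 ⊕ I denote the ideal {(0,i) : i ∈ I} of R ⊕ I. Then for every ε ∈ E_n(R, I) there exists ε̃ ∈ E_n(R ⊕ I, 0 ⊕ I) such that the entrywise image of ε̃ under φ equals ε. -/
/-- `ElemGroup n A` is the elementary group `Eₙ(A)`: the set of all products of elementary
matrices `e_{ij}(a) = 1 + a·E_{ij}` (`i ≠ j`).  Since the inverse of an elementary matrix is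
elementary, this submonoid is the subgroup of `GLₙ(A)` generated by elementary matrices. -/
def ElemGroup (n : ℕ) (A : Type*) [CommRing A] : Submonoid (Matrix (Fin n) (Fin n) A) :=
  Submonoid.closure {M | ∃ (i j : Fin n) (a : A), i ≠ j ∧ M = 1 + Matrix.single i j a}

/-- `RelElemGroup n A J` is the relative elementary group `Eₙ(A, J)`: the set of all products
of conjugates `α e_{ij}(a) α⁻¹` with `α ∈ Eₙ(A)`, `i ≠ j` and `a ∈ J`.  Since the inverse of
such a generator is again such a generator, this submonoid is the subgroup generated by the
conjugates `α e_{ij}(a) α⁻¹`. -/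
noncomputable def RelElemGroup (n : ℕ) (A : Type*) [CommRing A] (J : Ideal A) :
    Submonoid (Matrix (Fin n) (Fin n) A) :=
  Submonoid.closure {M | ∃ α ∈ ElemGroup n A, ∃ (i j : Fin n) (a : A), i ≠ j ∧ a ∈ J ∧
    M = α * (1 + Matrix.single i j a) * α⁻¹}

open Matrix

lemma elem_det_one {n : ℕ} {A : Type*} [CommRing A] {α : Matrix (Fin n) (Fin n) A}
    (hα : α ∈ ElemGroup n A) : α.det = 1 := by
  induction hα using Submonoid.closure_induction with
  | mem M hM =>
    obtain ⟨i, j, a, hij, rfl⟩ := hM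
    simpa [Matrix.transvection] using Matrix.det_transvection_of_ne i j hij a
  | one => simp
  | mul x y _ _ hx hy => simp [Matrix.det_mul, hx, hy]

lemma inv_of_det_one {n : ℕ} {A : Type*} [CommRing A] {α : Matrix (Fin n) (Fin n) A}
    (h : α.det = 1) : α⁻¹ = α.adjugate := by
  rw [Matrix.inv_def, h, Ring.inverse_one, one_smul]

lemma map_stdBasis {n : ℕ} {A B : Type*} [CommRing A] [CommRing B] (φ : A →+* B)
    (i j : Fin n) (a : A) :
    (Matrix.single i j a).map φ = Matrix.single i j (φ a) := by
  ext i' j'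
  simp [Matrix.single, Matrix.map_apply, apply_ite φ]

lemma elem_lift {R : Type*} [CommRing R] (I : Ideal R) (n : ℕ)
    (φ : Unitization R ↥I →+* R) (hφ : ∀ x : Unitization R ↥I, φ x = x.fst + ↑x.snd)
    {α : Matrix (Fin n) (Fin n) R} (hα : α ∈ ElemGroup n R) :
    ∃ β ∈ ElemGroup n (Unitization R ↥I), β.map φ = α := by
  induction hα using Submonoid.closure_induction with
  | mem M hM =>
    obtain ⟨i, j, a, hij, rfl⟩ := hM
    refine ⟨1 + Matrix.single i j (Unitization.inl a),
      Submonoid.subset_closure ⟨i, j, _, hij, rfl⟩, ?_⟩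
    have : φ (Unitization.inl a) = a := by simp [hφ]
    rw [Matrix.map_add φ φ.map_add, Matrix.map_one φ φ.map_zero φ.map_one, map_stdBasis, this]
  | one => exact ⟨1, one_mem _, Matrix.map_one φ φ.map_zero φ.map_one⟩
  | mul x y hx hy ihx ihy =>
    obtain ⟨β, hβ, rfl⟩ := ihx
    obtain ⟨γ, hγ, rfl⟩ := ihy
    exact ⟨β * γ, mul_mem hβ hγ, by rw [Matrix.map_mul]⟩

lemma inv_map_lift {R : Type*} [CommRing R] (I : Ideal R) (n : ℕ)
    (φ : Unitization R ↥I →+* R)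
    {β : Matrix (Fin n) (Fin n) (Unitization R ↥I)} (hβ : β ∈ ElemGroup n (Unitization R ↥I)) :
    (β⁻¹).map φ = (β.map φ)⁻¹ := by
  have h1 : β.det = 1 := elem_det_one hβ
  have h2 : (β.map φ).det = 1 := by rw [show β.map φ = φ.mapMatrix β from rfl, ← RingHom.map_det, h1, φ.map_one]
  rw [inv_of_det_one h1, inv_of_det_one h2]
  have := RingHom.map_adjugate φ β
  simpa [RingHom.mapMatrix_apply] using this

/-- Let `I` be an ideal of `R` and let `φ : R ⊕ I → R`, `φ(r,i) = r + i` be the natural map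
from the excision ring (Mathlib's `Unitization R I`), and let `Z = 0 ⊕ I` be the ideal
`{(0,i) : i ∈ I}` of `R ⊕ I`.  Every `ε ∈ Eₙ(R, I)` lifts to some `ε̃ ∈ Eₙ(R ⊕ I, 0 ⊕ I)`
with entrywise image `ε` under `φ`. -/
theorem relElem_lifts_to_excision {R : Type*} [CommRing R] (I : Ideal R)
    (n : ℕ) (hn : 2 ≤ n)
    (φ : Unitization R ↥I →+* R) (hφ : ∀ x : Unitization R ↥I, φ x = x.fst + ↑x.snd)
    (Z : Ideal (Unitization R ↥I)) (hZ : ∀ x : Unitization R ↥I, x ∈ Z ↔ x.fst = 0)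
    (ε : Matrix (Fin n) (Fin n) R) (hε : ε ∈ RelElemGroup n R I) :
    ∃ εt ∈ RelElemGroup n (Unitization R ↥I) Z, εt.map φ = ε := by
  induction hε using Submonoid.closure_induction with
  | mem M hM =>
    obtain ⟨α, hα, i, j, a, hij, haI, rfl⟩ := hM
    obtain ⟨β, hβ, hβα⟩ := elem_lift I n φ hφ hα
    set z : Unitization R ↥I := Unitization.inr ⟨a, haI⟩ with hz
    have hzZ : z ∈ Z := by rw [hZ]; simp [hz]
    have hφz : φ z = a := by simp [hφ, hz]
    refine ⟨β * (1 + Matrix.single i j z) * β⁻¹,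
      Submonoid.subset_closure ⟨β, hβ, i, j, z, hij, hzZ, rfl⟩, ?_⟩
    rw [Matrix.map_mul, Matrix.map_mul, Matrix.map_add φ φ.map_add,
      Matrix.map_one φ φ.map_zero φ.map_one, map_stdBasis, hφz, inv_map_lift I n φ hβ, hβα]
  | one => exact ⟨1, one_mem _, Matrix.map_one φ φ.map_zero φ.map_one⟩
  | mul x y hx hy ihx ihy =>
    obtain ⟨β, hβ, rfl⟩ := ihx
    obtain ⟨γ, hγ, rfl⟩ := ihy
    exact ⟨β * γ, mul_mem hβ hγ, by rw [Matrix.map_mul]⟩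
end

section
/- Let B and D be commutative rings such that D is a retract of B, i.e. there is a surjective ring homomorphism π : B → D and a ring homomorphism γ : D → B with π ∘ γ = id_D. Let J = ker(π) and let n ≥ 3. Then E_n(B, J) = E_n(B) ∩ SL_n(B, J). -/
namespace RetractAux

open Matrix

variable {n : ℕ} {A : Type*} [CommRing A]

lemma matrix_inv_one : (1 : Matrix (Fin n) (Fin n) A)⁻¹ = 1 :=
  Matrix.inv_eq_right_inv (mul_one 1)

lemma elem_det_eq_one {M : Matrix (Fin n) (Fin n) A} (h : M ∈ ElemGroup n A) :
    M.det = 1 := by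
  induction h using Submonoid.closure_induction with
  | mem x hx =>
    obtain ⟨i, j, a, hij, rfl⟩ := hx
    exact Matrix.det_transvection_of_ne i j hij a
  | one => simp
  | mul x y _ _ hx hy => rw [Matrix.det_mul, hx, hy, one_mul]

lemma elem_isUnit_det {M : Matrix (Fin n) (Fin n) A} (h : M ∈ ElemGroup n A) :
    IsUnit M.det := by rw [elem_det_eq_one h]; exact isUnit_one

lemma elem_inv_mem {M : Matrix (Fin n) (Fin n) A} (h : M ∈ ElemGroup n A) :
    M⁻¹ ∈ ElemGroup n A := by
  induction h using Submonoid.closure_induction with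
  | mem x hx =>
    obtain ⟨i, j, a, hij, rfl⟩ := hx
    have : (1 + Matrix.single i j a) * (1 + Matrix.single i j (-a)) = 1 := by
      have := Matrix.transvection_mul_transvection_same i j hij a (-a)
      simpa [Matrix.transvection] using this
    rw [Matrix.inv_eq_right_inv this]
    exact Submonoid.subset_closure ⟨i, j, -a, hij, rfl⟩
  | one => simpa using (ElemGroup n A).one_mem
  | mul x y hx hy hx' hy' =>
    rw [Matrix.mul_inv_rev]
    exact (ElemGroup n A).mul_mem hy' hx'

lemma relElem_conj_mem {J : Ideal A} {M α : Matrix (Fin n) (Fin n) A}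
    (hα : α ∈ ElemGroup n A) (hM : M ∈ RelElemGroup n A J) :
    α * M * α⁻¹ ∈ RelElemGroup n A J := by
  induction hM using Submonoid.closure_induction with
  | mem x hx =>
    obtain ⟨β, hβ, i, j, a, hij, ha, rfl⟩ := hx
    refine Submonoid.subset_closure ⟨α * β, (ElemGroup n A).mul_mem hα hβ, i, j, a, hij, ha, ?_⟩
    rw [Matrix.mul_inv_rev]
    simp only [mul_assoc]
  | one =>
    rw [mul_one, Matrix.mul_nonsing_inv _ (elem_isUnit_det hα)]
    exact (RelElemGroup n A J).one_mem
  | mul x y hx hy hx' hy' =>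
    have : α * (x * y) * α⁻¹ = (α * x * α⁻¹) * (α * y * α⁻¹) := by
      symm
      simp only [mul_assoc]
      rw [Matrix.nonsing_inv_mul_cancel_left _ _ (elem_isUnit_det hα)]
    rw [this]
    exact (RelElemGroup n A J).mul_mem hx' hy'

lemma map_stdBasisMatrix {A' : Type*} [CommRing A'] (f : A →+* A') (i j : Fin n) (a : A) :
    (Matrix.single i j a).map f = Matrix.single i j (f a) := by
  ext k l
  simp only [Matrix.map_apply, Matrix.single]
  by_cases h : i = k ∧ j = l <;> simp [h, Matrix.of_apply]

end RetractAux

open Matrix RetractAux in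
/-- Let `D` be a retract of `B`, witnessed by a surjection `π : B → D` and a section
`γ : D → B` with `π ∘ γ = id`, and let `J = ker π`.  Then for `n ≥ 3`,
`Eₙ(B, J) = Eₙ(B) ∩ SLₙ(B, J)`. -/
theorem relElem_eq_elem_inter_SL_of_retract {B D : Type*} [CommRing B] [CommRing D]
    (π : B →+* D) (γ : D →+* B) (hπ : Function.Surjective π)
    (hretract : π.comp γ = RingHom.id D)
    (n : ℕ) (hn : 3 ≤ n) :
    ∀ M : Matrix (Fin n) (Fin n) B,
      M ∈ RelElemGroup n B (RingHom.ker π) ↔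
        (M ∈ ElemGroup n B ∧ M.det = 1 ∧
          ∀ i j, M i j - (1 : Matrix (Fin n) (Fin n) B) i j ∈ RingHom.ker π) := by
  intro M
  set J := RingHom.ker π with hJ
  -- the idempotent endomorphism
  set f : B →+* B := γ.comp π with hf
  have hfa : ∀ a : B, a - f a ∈ J := by
    intro a
    simp only [hJ, RingHom.mem_ker, map_sub, hf, RingHom.comp_apply]
    have : π (γ (π a)) = π a := by
      have := congrArg (fun g : D →+* D => g (π a)) hretract
      simpa using this
    rw [this, sub_self]
  constructor
  · -- ⊆ direction
    intro hM
    induction hM using Submonoid.closure_induction with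
    | mem x hx =>
      obtain ⟨α, hα, i, j, a, hij, ha, rfl⟩ := hx
      have hαd : IsUnit α.det := elem_isUnit_det hα
      refine ⟨?_, ?_, ?_⟩
      · exact (ElemGroup n B).mul_mem ((ElemGroup n B).mul_mem hα
          (Submonoid.subset_closure ⟨i, j, a, hij, rfl⟩)) (elem_inv_mem hα)
      · have hdet : (1 + Matrix.single i j a).det = 1 :=
          Matrix.det_transvection_of_ne i j hij a
        rw [Matrix.det_mul, Matrix.det_mul, hdet,
          Matrix.det_nonsing_inv, elem_det_eq_one hα, mul_one, one_mul, Ring.inverse_one]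
      · intro k l
        -- show map π of the matrix equals 1
        have hmap : (α * (1 + Matrix.single i j a) * α⁻¹).map π = 1 := by
          have he : (1 + Matrix.single i j a).map π = 1 := by
            have : π a = 0 := ha
            rw [← RingHom.mapMatrix_apply, map_add, _root_.map_one, RingHom.mapMatrix_apply,
              map_stdBasisMatrix, this]
            simp
          calc (α * (1 + Matrix.single i j a) * α⁻¹).map π
              = α.map π * (1 + Matrix.single i j a).map π * (α⁻¹).map π := by
                rw [Matrix.map_mul, Matrix.map_mul]
            _ = α.map π * (α⁻¹).map π := by rw [he, mul_one]
            _ = (α * α⁻¹).map π := by rw [Matrix.map_mul]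
            _ = 1 := by rw [Matrix.mul_nonsing_inv _ hαd, Matrix.map_one π π.map_zero π.map_one]
        have := congrFun (congrFun hmap k) l
        simp only [Matrix.map_apply] at this
        simp only [hJ, RingHom.mem_ker, map_sub, this]
        by_cases h : k = l <;> simp [h, Matrix.one_apply, this]
    | one =>
      refine ⟨(ElemGroup n B).one_mem, by simp, fun i j => by simp⟩
    | mul x y hx hy hx' hy' =>
      obtain ⟨he1, hd1, hm1⟩ := hx'
      obtain ⟨he2, hd2, hm2⟩ := hy'
      refine ⟨(ElemGroup n B).mul_mem he1 he2, by rw [Matrix.det_mul, hd1, hd2, mul_one], ?_⟩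
      intro i j
      have : (x * y) i j - (1 : Matrix (Fin n) (Fin n) B) i j
          = ∑ k, (x i k - (1 : Matrix (Fin n) (Fin n) B) i k) * y k j
            + (y i j - (1 : Matrix (Fin n) (Fin n) B) i j) := by
        simp only [Matrix.mul_apply, sub_mul, Finset.sum_sub_distrib]
        have : ∑ k, (1 : Matrix (Fin n) (Fin n) B) i k * y k j = y i j := by
          rw [← Matrix.mul_apply, Matrix.one_mul]
        rw [this]; ring
      rw [this]
      exact J.add_mem (J.sum_mem fun k _ => J.mul_mem_right _ (hm1 i k)) (hm2 i j)
  · -- ⊇ direction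
    rintro ⟨hME, _, hMJ⟩
    obtain ⟨l, hl, hlprod⟩ := Submonoid.exists_list_of_mem_closure hME
    -- φ = entrywise application of f
    set φ : Matrix (Fin n) (Fin n) B →+* Matrix (Fin n) (Fin n) B := f.mapMatrix with hφ
    -- key: M.map f = 1
    have hMf : φ M = 1 := by
      ext i j
      have h0 : π (M i j) = π ((1 : Matrix (Fin n) (Fin n) B) i j) := by
        have := hMJ i j
        rw [hJ, RingHom.mem_ker, map_sub, sub_eq_zero] at this
        exact this
      simp only [hφ, RingHom.mapMatrix_apply, Matrix.map_apply, hf, RingHom.comp_apply, h0]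
      by_cases h : i = j <;> simp [h, Matrix.one_apply]
    -- main induction
    have key : ∀ l : List (Matrix (Fin n) (Fin n) B),
        (∀ x ∈ l, ∃ (i j : Fin n) (a : B), i ≠ j ∧ x = 1 + Matrix.single i j a) →
        l.prod * ((l.map φ).prod)⁻¹ ∈ RelElemGroup n B J := by
      intro l
      induction l with
      | nil => intro _; simpa [matrix_inv_one] using (RelElemGroup n B J).one_mem
      | cons ε t ih =>
        intro hgen
        obtain ⟨i, j, a, hij, rfl⟩ := hgen _ List.mem_cons_self
        have ht := fun x hx => hgen x (List.mem_cons_of_mem _ hx)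
        set ε' : Matrix (Fin n) (Fin n) B := 1 + Matrix.single i j (f a) with hε'
        have hφε : φ (1 + Matrix.single i j a) = ε' := by
          rw [hφ, map_add, _root_.map_one, RingHom.mapMatrix_apply, map_stdBasisMatrix]
        have hε'E : ε' ∈ ElemGroup n B := Submonoid.subset_closure ⟨i, j, f a, hij, rfl⟩
        have hε'inv : ε'⁻¹ = 1 + Matrix.single i j (-(f a)) := by
          apply Matrix.inv_eq_right_inv
          have := Matrix.transvection_mul_transvection_same i j hij (f a) (-(f a))
          simpa [Matrix.transvection] using this
        have hgen1 : (1 + Matrix.single i j a) * ε'⁻¹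
            = 1 + Matrix.single i j (a - f a) := by
          rw [hε'inv]
          have := Matrix.transvection_mul_transvection_same i j hij a (-(f a))
          simpa [Matrix.transvection, sub_eq_add_neg] using this
        have hTprod : ∀ s : List (Matrix (Fin n) (Fin n) B),
            (∀ x ∈ s, ∃ (i j : Fin n) (b : B), i ≠ j ∧ x = 1 + Matrix.single i j b) →
            (s.map φ).prod ∈ ElemGroup n B := by
          intro s hs
          refine Submonoid.list_prod_mem _ ?_
          intro x hx
          rw [List.mem_map] at hx
          obtain ⟨y, hy, rfl⟩ := hx
          obtain ⟨i', j', b, hij', rfl⟩ := hs y hy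
          refine Submonoid.subset_closure ⟨i', j', f b, hij', ?_⟩
          rw [hφ, map_add, _root_.map_one, RingHom.mapMatrix_apply, map_stdBasisMatrix]
        -- rewrite the product
        have hrw : ((1 + Matrix.single i j a) :: t).prod
              * (((((1 + Matrix.single i j a) :: t)).map φ).prod)⁻¹
            = ((1 + Matrix.single i j a) * ε'⁻¹)
              * (ε' * (t.prod * ((t.map φ).prod)⁻¹) * ε'⁻¹) := by
          have hε'd : IsUnit ε'.det := elem_isUnit_det hε'E
          rw [List.map_cons, List.prod_cons, List.prod_cons, hφε, Matrix.mul_inv_rev]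
          symm
          simp only [mul_assoc]
          rw [Matrix.nonsing_inv_mul_cancel_left _ _ hε'd]
        rw [hrw, hgen1]
        refine (RelElemGroup n B J).mul_mem ?_ (relElem_conj_mem hε'E (ih ht))
        refine Submonoid.subset_closure ⟨1, (ElemGroup n B).one_mem, i, j, a - f a, hij,
          hfa a, ?_⟩
        rw [matrix_inv_one, one_mul, mul_one]
    have := key l hl
    rw [hlprod] at this
    have hmapped : (l.map φ).prod = φ M := by
      rw [← hlprod, ← map_list_prod φ l]
    rw [hmapped, hMf, matrix_inv_one, mul_one] at this
    exact this
end

section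
/- Let (R, 𝔪) be a commutative local ring and let f ∈ R[X] be a Weierstrass polynomial, i.e. f = Xⁿ + a₁X^{n−1} + ⋯ + aₙ with all aᵢ ∈ 𝔪. Let P = (𝔪, X) be the maximal ideal of R[X] generated by 𝔪 and X. Then the localization map R[X] → R[X]_P is an analytic isomorphism along f: f is a non-zero-divisor of R[X], its image is a non-zero-divisor of R[X]_P, and the induced ring homomorphism R[X]/(f) → R[X]_P/(f) is bijective. -/
namespace WeierstrassAux

open Polynomial Ideal

variable {R : Type*} [CommRing R] [IsLocalRing R]

theorem P_eq_ker (P : Ideal R[X])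
    (hPdef : P = Ideal.span
      (C '' ((IsLocalRing.maximalIdeal R : Ideal R) : Set R) ∪ {X})) :
    P = RingHom.ker ((Ideal.Quotient.mk (IsLocalRing.maximalIdeal R)).comp
      (constantCoeff : R[X] →+* R)) := by
  apply le_antisymm
  · rw [hPdef, span_le]
    rintro p (⟨r, hr, rfl⟩ | rfl)
    · simp only [SetLike.mem_coe, RingHom.mem_ker, RingHom.comp_apply, constantCoeff_apply,
        coeff_C_zero, Ideal.Quotient.eq_zero_iff_mem]
      exact hr
    · simp [RingHom.mem_ker]
  · intro p hp
    simp only [RingHom.mem_ker, RingHom.comp_apply, Ideal.Quotient.eq_zero_iff_mem,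
      constantCoeff_apply] at hp
    have h1 : C (p.coeff 0) ∈ P := by
      rw [hPdef]; exact subset_span (Or.inl ⟨_, hp, rfl⟩)
    have h2 : p - C (p.coeff 0) ∈ P := by
      have hx : X ∣ p - C (p.coeff 0) := by
        rw [X_dvd_iff]; simp
      have hXP : X ∈ P := by rw [hPdef]; exact subset_span (Or.inr rfl)
      exact ((span_singleton_le_iff_mem P).mpr hXP) (mem_span_singleton.mpr hx)
    simpa using add_mem h1 h2

theorem P_maximal (P : Ideal R[X])
    (hPdef : P = Ideal.span
      (C '' ((IsLocalRing.maximalIdeal R : Ideal R) : Set R) ∪ {X})) :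
    P.IsMaximal := by
  rw [P_eq_ker P hPdef]
  refine RingHom.ker_isMaximal_of_surjective (K := IsLocalRing.ResidueField R) _ fun x => ?_
  obtain ⟨r, rfl⟩ := Ideal.Quotient.mk_surjective x
  exact ⟨C r, congrArg (Ideal.Quotient.mk _) (coeff_C_zero)⟩

theorem wk_unit (f : R[X]) (hf : f.Monic)
    (hcoeff : ∀ i < f.natDegree, f.coeff i ∈ IsLocalRing.maximalIdeal R)
    (P : Ideal R[X])
    (hPdef : P = Ideal.span
      (C '' ((IsLocalRing.maximalIdeal R : Ideal R) : Set R) ∪ {X}))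
    {g : R[X]} (hg : g ∉ P) :
    IsUnit (Ideal.Quotient.mk (Ideal.span {f}) g) := by
  by_contra hng
  obtain ⟨M, hM, hgM⟩ := Ideal.exists_le_maximal _
    ((Ideal.span_singleton_eq_top).not.mpr hng)
  set mk0 := Ideal.Quotient.mk (Ideal.span {f}) with hmk0
  haveI hM' : (M.comap mk0).IsMaximal :=
    comap_isMaximal_of_surjective _ Ideal.Quotient.mk_surjective
  haveI : Module.Finite R (R[X] ⧸ Ideal.span {f}) :=
    Module.Finite.of_basis (AdjoinRoot.powerBasis' hf).basis
  have hMcomap : (Ideal.comap (algebraMap R (R[X] ⧸ Ideal.span {f})) M).IsMaximal :=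
    isMaximal_comap_of_isIntegral_of_isMaximal M
  have hm : Ideal.comap (algebraMap R (R[X] ⧸ Ideal.span {f})) M
      = IsLocalRing.maximalIdeal R := IsLocalRing.eq_maximalIdeal hMcomap
  have hCm : ∀ r ∈ IsLocalRing.maximalIdeal R, C r ∈ M.comap mk0 := by
    intro r hr
    have h1 : r ∈ Ideal.comap (algebraMap R (R[X] ⧸ Ideal.span {f})) M := hm ▸ hr
    exact h1
  have hfM : f ∈ M.comap mk0 := by
    show mk0 f ∈ M
    have h0 : mk0 f = 0 := Ideal.Quotient.eq_zero_iff_mem.mpr (subset_span rfl)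
    rw [h0]; exact M.zero_mem
  have hXn : X ^ f.natDegree - f ∈ M.comap mk0 := by
    have hmap : X ^ f.natDegree - f ∈ Ideal.map (C : R →+* R[X]) (IsLocalRing.maximalIdeal R) := by
      rw [Ideal.mem_map_C_iff]
      intro k
      rcases lt_trichotomy k f.natDegree with h | h | h
      · simpa [coeff_X_pow, Nat.ne_of_lt h] using (IsLocalRing.maximalIdeal R).neg_mem (hcoeff k h)
      · subst h; simp [coeff_X_pow, hf.coeff_natDegree]
      · simp [coeff_X_pow, Nat.ne_of_gt h, coeff_eq_zero_of_natDegree_lt h]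
    exact (Ideal.map_le_iff_le_comap.mpr (fun r hr => hCm r hr)) hmap
  have hX : X ∈ M.comap mk0 := by
    have hpow : X ^ f.natDegree ∈ M.comap mk0 := by
      simpa using add_mem hXn hfM
    exact hM'.isPrime.mem_of_pow_mem _ hpow
  have hPle : P ≤ M.comap mk0 := by
    rw [hPdef, span_le]
    rintro p (⟨r, hr, rfl⟩ | rfl)
    · exact hCm r hr
    · exact hX
  have hPM : P = M.comap mk0 :=
    ((P_maximal P hPdef).eq_of_le hM'.ne_top hPle)
  exact hg (hPM ▸ (hgM (subset_span rfl) : mk0 g ∈ M))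

end WeierstrassAux

open Polynomial Ideal WeierstrassAux in
set_option synthInstance.maxHeartbeats 1000000 in
set_option maxHeartbeats 1600000 in
/-- Let `(R, 𝔪)` be a local ring, `f ∈ R[X]` a Weierstrass polynomial (monic with all
lower-order coefficients in `𝔪`), and `P = (𝔪, X)` the maximal ideal of `R[X]` generated by
`𝔪` and `X`.  Then the localization map `R[X] → R[X]_P` is an analytic isomorphism
along `f`. -/
theorem weierstrass_analyticIso {R : Type*} [CommRing R] [IsLocalRing R]
    (f : Polynomial R) (hf : f.Monic)
    (hcoeff : ∀ i < f.natDegree, f.coeff i ∈ IsLocalRing.maximalIdeal R)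
    (P : Ideal (Polynomial R)) [hP : P.IsPrime]
    (hPdef : P = Ideal.span
      (Polynomial.C '' ((IsLocalRing.maximalIdeal R : Ideal R) : Set R) ∪ {Polynomial.X})) :
    IsAnalyticIsoAlong (algebraMap (Polynomial R) (Localization.AtPrime P)) f := by
  let φ := algebraMap (Polynomial R) (Localization.AtPrime P)
  let mk0 := Ideal.Quotient.mk (Ideal.span {f})
  have hunit : ∀ s ∈ P.primeCompl, IsUnit (mk0 s) := fun s hs =>
    wk_unit f hf hcoeff P hPdef hs
  have hfB : f ∈ nonZeroDivisors R[X] := hf.mem_nonZeroDivisors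
  have hfA : φ f ∈ nonZeroDivisors (Localization.AtPrime P) := by
    rw [mem_nonZeroDivisors_iff_right]
    intro z hz
    obtain ⟨⟨a, s⟩, hs⟩ := IsLocalization.surj (M := P.primeCompl) z
    have h1 : φ (a * f) = 0 := by
      rw [_root_.map_mul]
      calc φ a * φ f = z * φ s * φ f := by rw [hs]
        _ = z * φ f * φ s := by ring
        _ = 0 := by rw [hz, zero_mul]
    obtain ⟨c, hc⟩ := (IsLocalization.map_eq_zero_iff P.primeCompl
      (Localization.AtPrime P) _).mp h1
    have hca : (c : R[X]) * a = 0 := by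
      refine mem_nonZeroDivisors_iff_right.mp hfB _ ?_
      calc (c : R[X]) * a * f = (c : R[X]) * (a * f) := by ring
        _ = 0 := hc
    have ha0 : φ a = 0 := (IsLocalization.map_eq_zero_iff P.primeCompl
      (Localization.AtPrime P) _).mpr ⟨c, hca⟩
    have hzs : z * φ s = 0 := by rw [hs, ha0]
    have hu := IsLocalization.map_units (Localization.AtPrime P) s
    exact hu.mul_left_eq_zero.mp hzs
  refine ⟨hfB, hfA, ?_, ?_⟩
  · -- injective
    rw [injective_iff_map_eq_zero]
    intro q hq
    obtain ⟨b, rfl⟩ := Ideal.Quotient.mk_surjective q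
    rw [Ideal.quotientMap_mk, Ideal.Quotient.eq_zero_iff_mem, Ideal.mem_span_singleton] at hq
    obtain ⟨z, hz⟩ := hq
    obtain ⟨⟨a, s⟩, hs⟩ := IsLocalization.surj (M := P.primeCompl) z
    have heq : φ (b * s) = φ (f * a) := by
      rw [_root_.map_mul, _root_.map_mul, hz]
      calc φ f * z * φ s = φ f * (z * φ s) := by ring
        _ = φ f * φ a := by rw [hs]
    obtain ⟨c, hc⟩ := (IsLocalization.eq_iff_exists P.primeCompl
      (Localization.AtPrime P)).mp heq
    have h2 : mk0 ((c : R[X]) * s) * mk0 b = 0 := by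
      rw [← _root_.map_mul]
      have he : (c : R[X]) * s * b = (c : R[X]) * a * f := by
        calc (c : R[X]) * s * b = (c : R[X]) * (b * s) := by ring
          _ = (c : R[X]) * (f * a) := hc
          _ = (c : R[X]) * a * f := by ring
      rw [he, _root_.map_mul]
      have hf0 : mk0 f = 0 := Ideal.Quotient.eq_zero_iff_mem.mpr (subset_span rfl)
      rw [hf0, mul_zero]
    have hcs : IsUnit (mk0 ((c : R[X]) * s)) := hunit _ (mul_mem c.2 s.2)
    exact hcs.mul_right_eq_zero.mp h2
  · -- surjective
    intro q
    obtain ⟨z, rfl⟩ := Ideal.Quotient.mk_surjective q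
    obtain ⟨⟨a, s⟩, hs⟩ := IsLocalization.surj (M := P.primeCompl) z
    obtain ⟨v, hv⟩ := (hunit s s.2).exists_right_inv
    refine ⟨mk0 a * v, ?_⟩
    set ψ := Ideal.quotientMap (Ideal.span {φ f}) φ
      ((Ideal.span_singleton_le_iff_mem _).mpr (Ideal.mem_comap.mpr (Ideal.subset_span rfl)))
      with hψ
    have key : Ideal.Quotient.mk (Ideal.span {φ f}) z * ψ (mk0 s) = ψ (mk0 a) := by
      rw [hψ, Ideal.quotientMap_mk, Ideal.quotientMap_mk, ← _root_.map_mul, hs]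
    calc ψ (mk0 a * v) = ψ (mk0 a) * ψ v := by rw [_root_.map_mul]
      _ = Ideal.Quotient.mk _ z * ψ (mk0 s) * ψ v := by rw [key]
      _ = Ideal.Quotient.mk _ z * ψ (mk0 s * v) := by rw [_root_.map_mul]; ring
      _ = Ideal.Quotient.mk _ z := by rw [hv, map_one, mul_one]
end
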